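/- Let F be a field of characteristic p > 0 with #F ≥ k+1, n ≥ 2, and b := n+1 with base-p digits b_σ. Suppose T(R,b) ≤ k+1 < T(Q,b) where T(R,b) := Σ_{μ≥R} b_μ p^μ, and at most one digit b_σ is non-zero for σ ∈ {Q,...,R−1}. Then the k-nucleus of the normal rational curve V_1^n has projective dimension n − (1 + Σ_{μ=0}^{R−1} n_μ p^μ) · Π_{σ=R}^∞ (n_σ + 1), where n_σ are the base-p digits of n. -/

import Mathlib

/-- The `k`-osculating subspace (here parametrized by `c = k+1`, the number of spanning
columns) of the normal rational curve `x ↦ (1, x, …, xⁿ)` in `F^{n+1}` at the point with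
parameter `u`: the span of the first `c` columns of the matrix with entries
`C(r,s) u^{r−s}` (`0 ≤ s ≤ r ≤ n`), i.e. of the point and its first `c-1`
Hasse-derivative points. -/
def oscSub (F : Type) [Field F] (n : ℕ) (u : F) (c : ℕ) : Submodule F (Fin (n + 1) → F) :=
  Submodule.span F
    (Set.range fun s : Fin c => fun r : Fin (n + 1) => (r.1.choose s.1 : F) * u ^ (r.1 - s.1))

/-- The `k`-osculating subspace (with `c = k+1`) at the point `u = ∞` of the curve:
the span of the last `c` standard basis vectors `e_n, …, e_{n-c+1}`. -/
def oscInfty (F : Type) [Field F] (n c : ℕ) : Submodule F (Fin (n + 1) → F) :=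
  Submodule.span F {v | ∃ i : Fin (n + 1), n + 1 ≤ i.1 + c ∧ v = Pi.single i 1}

/-- The `k`-nucleus (with `c = k+1`) of the normal rational curve: the intersection of
all its `k`-osculating subspaces. -/
def nucleus (F : Type) [Field F] (n c : ℕ) : Submodule F (Fin (n + 1) → F) :=
  (⨅ u : F, oscSub F n u c) ⊓ oscInfty F n c

/-- The σ-th digit of `x` in base `p`. -/
def digit (p x σ : ℕ) : ℕ := x / p ^ σ % p

/-- The top line function `T(R,b) = Σ_{σ≥R} b_σ p^σ`. (Digits of `b` with index
`σ > b` vanish, so the sum over `R ≤ σ < b+1` is the full infinite sum.) -/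
def topLine (p b R : ℕ) : ℕ := ∑ σ ∈ Finset.Ico R (b + 1), digit p b σ * p ^ σ

namespace NRC

open Finset

variable {p : ℕ}

lemma digit_lt (hp : 2 ≤ p) (x σ : ℕ) : digit p x σ < p := Nat.mod_lt _ (by omega)

lemma digit_zero (p x : ℕ) : digit p x 0 = x % p := by simp [digit]

lemma digit_succ (p x σ : ℕ) : digit p x (σ + 1) = digit p (x / p) σ := by
  simp [digit, Nat.div_div_eq_div_mul, pow_succ']

lemma digit_zero_left (p σ : ℕ) : digit p 0 σ = 0 := by simp [digit]

lemma mod_pow_succ_eq (p x K : ℕ) :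
    x % p ^ (K + 1) = x % p ^ K + (x / p ^ K % p) * p ^ K := by
  have h1 : x % (p ^ K * p) / p ^ K = x / p ^ K % p := Nat.mod_mul_right_div_self x _ _
  have h2 : x % (p ^ K * p) % p ^ K = x % p ^ K := Nat.mod_mod_of_dvd _ ⟨p, rfl⟩
  calc x % p ^ (K + 1) = x % (p ^ K * p) := by rw [pow_succ]
    _ = p ^ K * (x % (p ^ K * p) / p ^ K) + x % (p ^ K * p) % p ^ K := (Nat.div_add_mod _ _).symm
    _ = x % p ^ K + x / p ^ K % p * p ^ K := by rw [h1, h2]; ring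

lemma sum_digit_mul_pow (p x K : ℕ) :
    ∑ σ ∈ range K, digit p x σ * p ^ σ = x % p ^ K := by
  induction K with
  | zero => simp [Nat.mod_one]
  | succ K ih => rw [sum_range_succ, ih, mod_pow_succ_eq]; rfl

lemma self_lt_pow (hp : 2 ≤ p) (x : ℕ) : x < p ^ x := Nat.lt_pow_self (by omega : 1 < p)

lemma mod_pow_self (hp : 2 ≤ p) (x : ℕ) : x % p ^ x = x :=
  Nat.mod_eq_of_lt (self_lt_pow hp x)

lemma topLine_eq (hp : 2 ≤ p) (b R : ℕ) : topLine p b R = b - b % p ^ R := by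
  rcases le_or_gt R (b + 1) with h | h
  · have key := Finset.sum_range_add_sum_Ico (fun σ => digit p b σ * p ^ σ) h
    have e1 : ∑ σ ∈ range R, digit p b σ * p ^ σ = b % p ^ R := sum_digit_mul_pow p b R
    have e2 : ∑ σ ∈ range (b + 1), digit p b σ * p ^ σ = b := by
      rw [sum_digit_mul_pow]
      exact Nat.mod_eq_of_lt (lt_of_lt_of_le (self_lt_pow hp b)
        (Nat.pow_le_pow_right (by omega) (by omega)))
    have key : ∑ σ ∈ range R, digit p b σ * p ^ σ + ∑ σ ∈ Ico R (b + 1), digit p b σ * p ^ σ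
        = ∑ σ ∈ range (b + 1), digit p b σ * p ^ σ := by
      simpa using Finset.sum_range_add_sum_Ico (fun σ => digit p b σ * p ^ σ) h
    simp only [topLine]
    omega
  · have : b % p ^ R = b := Nat.mod_eq_of_lt
      (lt_of_lt_of_le (self_lt_pow hp b) (Nat.pow_le_pow_right (by omega) (by omega)))
    rw [topLine, Finset.Ico_eq_empty (by omega), this]
    simp

/-- digit-wise order -/
def Dle (p s r : ℕ) : Prop := ∀ σ, digit p s σ ≤ digit p r σ

lemma dle_refl (s : ℕ) : Dle p s s := fun _ => le_rfl

lemma dle_zero (r : ℕ) : Dle p 0 r := fun σ => by simp [digit_zero_left]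

lemma dle_iff {s r : ℕ} : Dle p s r ↔ s % p ≤ r % p ∧ Dle p (s / p) (r / p) := by
  constructor
  · intro h
    refine ⟨by simpa [digit_zero] using h 0, fun σ => by simpa [digit_succ] using h (σ + 1)⟩
  · rintro ⟨h0, h1⟩ σ
    cases σ with
    | zero => simpa [digit_zero] using h0
    | succ σ => simpa [digit_succ] using h1 σ

lemma dle_le (hp : 2 ≤ p) {s r : ℕ} (h : Dle p s r) : s ≤ r := by
  calc s = s % p ^ s := (mod_pow_self hp s).symm
    _ = ∑ σ ∈ range s, digit p s σ * p ^ σ := (sum_digit_mul_pow p s s).symm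
    _ ≤ ∑ σ ∈ range s, digit p r σ * p ^ σ :=
        Finset.sum_le_sum fun σ _ => Nat.mul_le_mul_right _ (h σ)
    _ = r % p ^ s := sum_digit_mul_pow p r s
    _ ≤ r := Nat.mod_le _ _

lemma eq_zero_of_dle_zero (hp : 2 ≤ p) {s : ℕ} (h : Dle p s 0) : s = 0 :=
  Nat.le_zero.1 (dle_le hp h)

lemma not_dvd_choose_of_lt_of_le (hp : p.Prime) {a c : ℕ} (ha : a < p) (hc : c ≤ a) :
    ¬ p ∣ a.choose c := by
  intro hd
  have h1 : a.choose c ∣ Nat.factorial a :=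
    ⟨Nat.factorial c * Nat.factorial (a - c), by
      rw [← Nat.choose_mul_factorial_mul_factorial hc]; ring⟩
  have : p ∣ Nat.factorial a := hd.trans h1
  exact absurd ((Nat.Prime.dvd_factorial hp).1 this) (by omega)

lemma lucas_not_dvd_iff (hp : p.Prime) : ∀ r s : ℕ, (¬ p ∣ r.choose s) ↔ Dle p s r := by
  intro r
  induction r using Nat.strong_induction_on with
  | _ r IH =>
    intro s
    rcases Nat.eq_zero_or_pos r with rfl | hr
    · rcases Nat.eq_zero_or_pos s with rfl | hs
      · simpa [Nat.dvd_one, hp.ne_one] using dle_refl (p := p) 0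
      · constructor
        · intro h; exact absurd (by simp [Nat.choose_eq_zero_of_lt hs]) h
        · intro h; exact absurd (eq_zero_of_dle_zero hp.two_le h) (by omega)
    · haveI : Fact p.Prime := ⟨hp⟩
      have step : r.choose s ≡ (r % p).choose (s % p) * (r / p).choose (s / p) [MOD p] :=
        Choose.choose_modEq_choose_mod_mul_choose_div_nat
      have hdvd : p ∣ r.choose s ↔ p ∣ (r % p).choose (s % p) * (r / p).choose (s / p) := by
        rw [← Nat.modEq_zero_iff_dvd, ← Nat.modEq_zero_iff_dvd]
        exact ⟨step.symm.trans, step.trans⟩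
      have hsplit := hp.dvd_mul (m := (r % p).choose (s % p)) (n := (r / p).choose (s / p))
      have IH' := IH (r / p) (Nat.div_lt_self hr hp.one_lt) (s / p)
      have hlow : ¬ p ∣ (r % p).choose (s % p) ↔ s % p ≤ r % p := by
        constructor
        · intro h
          by_contra hlt
          have hz : (r % p).choose (s % p) = 0 := Nat.choose_eq_zero_of_lt (by omega)
          exact h (by simp [hz])
        · intro h
          exact not_dvd_choose_of_lt_of_le hp (Nat.mod_lt _ hp.pos) h
      rw [dle_iff, hdvd, hsplit, ← IH', ← hlow]
      tauto


lemma choose_sum_eq {A : Type*} [CommRing A] (x y : A) (h : x + y = 0) (N r t : ℕ)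
    (hr : r ≤ N) :
    ∑ s ∈ range (N + 1), (r.choose s : A) * x ^ (r - s) * ((s.choose t : A) * y ^ (s - t))
      = if r = t then 1 else 0 := by
  rcases le_or_gt t r with ht | ht
  · have hsub : Icc t r ⊆ range (N + 1) := fun s hs => by
      simp only [mem_Icc] at hs; simp only [mem_range]; omega
    rw [← Finset.sum_subset hsub (fun s hs hns => by
      simp only [mem_Icc, not_and, not_le] at hns
      simp only [mem_range] at hs
      rcases le_or_gt s r with h1 | h1
      · have h2 : s < t := by
          rcases le_or_gt t s with h3 | h3
          · exact absurd (hns h3) (by omega)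
          · exact h3
        have : s.choose t = 0 := Nat.choose_eq_zero_of_lt h2
        simp [this]
      · have : r.choose s = 0 := Nat.choose_eq_zero_of_lt h1
        simp [this])]
    have : Icc t r = Ico t (r + 1) := by rw [Finset.Ico_add_one_right_eq_Icc]
    rw [this, Finset.sum_Ico_eq_sum_range]
    have hre : r + 1 - t = (r - t) + 1 := by omega
    rw [hre]
    have hterm : ∀ i ∈ range ((r - t) + 1),
        (r.choose (t + i) : A) * x ^ (r - (t + i)) * (((t + i).choose t : A) * y ^ (t + i - t))
        = (r.choose t : A) * (y ^ i * x ^ ((r - t) - i) * ((r - t).choose i : A)) := by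
      intro i hi
      simp only [mem_range] at hi
      have h1 : t + i ≤ r := by omega
      have hcc : r.choose (t + i) * (t + i).choose t = r.choose t * (r - t).choose i := by
        have := Nat.choose_mul (n := r) (Nat.le_add_right t i)
        simpa using this
      have hcast : (r.choose (t + i) : A) * ((t + i).choose t : A)
          = (r.choose t : A) * ((r - t).choose i : A) := by
        rw [← Nat.cast_mul, ← Nat.cast_mul, hcc]
      have he1 : t + i - t = i := by omega
      have he2 : r - (t + i) = (r - t) - i := by omega
      rw [he1, he2]
      calc (r.choose (t + i) : A) * x ^ ((r - t) - i) * (((t + i).choose t : A) * y ^ i)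
          = ((r.choose (t + i) : A) * ((t + i).choose t : A)) * (y ^ i * x ^ ((r - t) - i)) := by
            ring
        _ = ((r.choose t : A) * ((r - t).choose i : A)) * (y ^ i * x ^ ((r - t) - i)) := by
            rw [hcast]
        _ = (r.choose t : A) * (y ^ i * x ^ ((r - t) - i) * ((r - t).choose i : A)) := by ring
    have h' : y + x = 0 := by rw [add_comm]; exact h
    rw [Finset.sum_congr rfl hterm, ← Finset.mul_sum, ← add_pow, h']
    rcases Nat.eq_or_lt_of_le ht with rfl | hlt
    · simp
    · have h0 : r - t ≠ 0 := by omega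
      rw [zero_pow h0, mul_zero, if_neg (by omega)]
  · rw [if_neg (by omega)]
    apply Finset.sum_eq_zero
    intro s _
    rcases le_or_gt s r with h1 | h1
    · have : s.choose t = 0 := Nat.choose_eq_zero_of_lt (by omega)
      simp [this]
    · have : r.choose s = 0 := Nat.choose_eq_zero_of_lt h1
      simp [this]


section LinAlg

variable (F : Type) [Field F]

/-- submodule of vectors vanishing on a coordinate set -/
def coordZero (b : ℕ) (P : Fin b → Prop) : Submodule F (Fin b → F) where
  carrier := {x | ∀ i, P i → x i = 0}
  add_mem' := fun {a b'} ha hb i hi => by simp [Pi.add_apply, ha i hi, hb i hi]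
  zero_mem' := fun i _ => rfl
  smul_mem' := fun c x hx i hi => by simp [Pi.smul_apply, hx i hi]

lemma mem_coordZero {b : ℕ} {P : Fin b → Prop} {x : Fin b → F} :
    x ∈ coordZero F b P ↔ ∀ i, P i → x i = 0 := Iff.rfl

/-- kernel of an explicit linear functional as a submodule -/
def dualKer (b : ℕ) (a : Fin b → F) : Submodule F (Fin b → F) where
  carrier := {x | ∑ s, a s * x s = 0}
  add_mem' := fun {u v} hu hv => by
    simp only [Set.mem_setOf_eq, Pi.add_apply, mul_add, Finset.sum_add_distrib] at *
    rw [hu, hv, add_zero]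
  zero_mem' := by simp
  smul_mem' := fun c x hx => by
    simp only [Set.mem_setOf_eq, Pi.smul_apply, smul_eq_mul] at *
    have : ∀ s : Fin b, a s * (c * x s) = c * (a s * x s) := fun s => by ring
    rw [Finset.sum_congr rfl fun s _ => this s, ← Finset.mul_sum, hx, mul_zero]
  
lemma mem_dualKer {b : ℕ} {a x : Fin b → F} :
    x ∈ dualKer F b a ↔ ∑ s, a s * x s = 0 := Iff.rfl

variable {n c : ℕ}

lemma oscSub_le_dualKer (u : F) {r : ℕ} (hc : c ≤ r) (hr : r ≤ n) :
    oscSub F n u c ≤ dualKer F (n + 1) (fun s => (r.choose s.1 : F) * (-u) ^ (r - s.1)) := by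
  rw [oscSub, Submodule.span_le]
  rintro _ ⟨t, rfl⟩
  rw [SetLike.mem_coe, mem_dualKer]
  have := choose_sum_eq (-u) u (by ring) n r t.1 hr
  rw [Fin.sum_univ_eq_sum_range
    (fun s => (r.choose s : F) * (-u) ^ (r - s) * ((s.choose t.1 : F) * u ^ (s - t.1)))]
  rw [this, if_neg (by omega)]

lemma oscInfty_le_coordZero :
    oscInfty F n c ≤ coordZero F (n + 1) (fun i => i.1 + c < n + 1) := by
  rw [oscInfty, Submodule.span_le]
  rintro _ ⟨j, hj, rfl⟩
  rw [SetLike.mem_coe, mem_coordZero]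
  intro i hi
  rw [Pi.single_apply, if_neg (by intro h; rw [h] at hi; omega)]

lemma single_mem_oscInfty {i : Fin (n + 1)} (h : n + 1 ≤ i.1 + c) :
    Pi.single i (1 : F) ∈ oscInfty F n c :=
  Submodule.subset_span ⟨i, h, rfl⟩

variable (p : ℕ) [CharP F p]

lemma single_mem_oscSub (u : F) (i : Fin (n + 1)) (hc : c ≤ n + 1)
    (hgood : ∀ r, c ≤ r → r ≤ n → p ∣ r.choose i.1) :
    Pi.single i (1 : F) ∈ oscSub F n u c := by
  have key : Pi.single i (1 : F) = ∑ s : Fin c,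
      ((s.1.choose i.1 : F) * (-u) ^ (s.1 - i.1)) •
        (fun r : Fin (n + 1) => (r.1.choose s.1 : F) * u ^ (r.1 - s.1)) := by
    funext r
    rw [Finset.sum_apply]
    simp only [Pi.smul_apply, smul_eq_mul]
    rw [Fin.sum_univ_eq_sum_range
      (fun s => (s.choose i.1 : F) * (-u) ^ (s - i.1) * ((r.1.choose s : F) * u ^ (r.1 - s)))]
    have hext : ∑ s ∈ Finset.range c,
        (s.choose i.1 : F) * (-u) ^ (s - i.1) * ((r.1.choose s : F) * u ^ (r.1 - s))
        = ∑ s ∈ Finset.range (n + 1),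
        (s.choose i.1 : F) * (-u) ^ (s - i.1) * ((r.1.choose s : F) * u ^ (r.1 - s)) := by
      apply Finset.sum_subset (Finset.range_subset_range.2 (by omega))
      intro s hs hns
      simp only [Finset.mem_range] at hs hns
      have hz : (s.choose i.1 : F) = 0 :=
        (CharP.cast_eq_zero_iff F p _).2 (hgood s (by omega) (by omega))
      rw [hz]; ring
    rw [hext]
    have hcomm : ∀ s, (s.choose i.1 : F) * (-u) ^ (s - i.1) * ((r.1.choose s : F) * u ^ (r.1 - s))
        = (r.1.choose s : F) * u ^ (r.1 - s) * ((s.choose i.1 : F) * (-u) ^ (s - i.1)) :=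
      fun s => by ring
    rw [Finset.sum_congr rfl fun s _ => hcomm s]
    rw [choose_sum_eq u (-u) (by ring) n r.1 i.1 (by omega)]
    rw [Pi.single_apply]
    congr 1
    simp [Fin.ext_iff, eq_comm]
  rw [key]
  exact Submodule.sum_mem _ fun s _ => Submodule.smul_mem _ _
    (Submodule.subset_span ⟨s, rfl⟩)

lemma nucleus_coord_zero (hp : p.Prime) (hF : (c : Cardinal) ≤ Cardinal.mk F)
    {x : Fin (n + 1) → F} (hx : x ∈ nucleus F n c)
    {r : ℕ} (hcr : c ≤ r) (hrn : r ≤ n) (s : Fin (n + 1)) (hps : ¬ p ∣ r.choose s.1) :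
    x s = 0 := by
  have hlow : ∀ i : Fin (n + 1), i.1 + c < n + 1 → x i = 0 :=
    (mem_coordZero F).1 (oscInfty_le_coordZero F hx.2)
  -- the case c = 0 is easy
  rcases Nat.eq_zero_or_pos c with rfl | hc0
  · exact hlow s (by omega)
  -- s.1 ≤ r, else choose = 0 and p ∣ 0
  rcases le_or_gt s.1 r with hsr | hsr
  swap
  · exact absurd (by simp [Nat.choose_eq_zero_of_lt hsr]) hps
  -- the linear conditions
  have hker : ∀ u : F, ∑ t : Fin (n + 1), (r.choose t.1 : F) * u ^ (r - t.1) * x t = 0 := by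
    intro u
    have h1 : x ∈ oscSub F n (-u) c := (Submodule.mem_iInf _).1 hx.1 (-u)
    have h2 := oscSub_le_dualKer F (-u) hcr hrn h1
    rw [mem_dualKer] at h2
    simpa using h2
  -- the polynomial
  set P : Polynomial F := ∑ t : Fin (n + 1),
    Polynomial.C ((r.choose t.1 : F) * x t) * Polynomial.X ^ (r - t.1) with hP
  have heval : ∀ u : F, P.eval u = 0 := by
    intro u
    rw [hP]
    rw [Polynomial.eval_finset_sum]
    simp only [Polynomial.eval_mul, Polynomial.eval_C, Polynomial.eval_pow, Polynomial.eval_X]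
    rw [← hker u]
    exact Finset.sum_congr rfl fun t _ => by ring
  have hdeg : P.natDegree < c := by
    have : P.natDegree ≤ c - 1 := by
      rw [hP]
      apply Polynomial.natDegree_sum_le_of_forall_le
      intro t _
      by_cases hxt : x t = 0
      · simp [hxt]
      · have ht : n + 1 ≤ t.1 + c := by
          by_contra hcon
          exact hxt (hlow t (by omega))
        calc (Polynomial.C ((r.choose t.1 : F) * x t) * Polynomial.X ^ (r - t.1)).natDegree
            ≤ (Polynomial.X ^ (r - t.1) : Polynomial F).natDegree :=
              Polynomial.natDegree_C_mul_le _ _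
          _ = r - t.1 := Polynomial.natDegree_X_pow _
          _ ≤ c - 1 := by omega
    omega
  have hP0 : P = 0 := by
    apply Polynomial.eq_zero_of_forall_eval_zero_of_natDegree_lt_card _ heval
    calc (P.natDegree : Cardinal) < (c : Cardinal) := by exact_mod_cast hdeg
      _ ≤ Cardinal.mk F := hF
  -- extract the coefficient at r - s.1
  have hcoeff : P.coeff (r - s.1) = (r.choose s.1 : F) * x s := by
    rw [hP, Polynomial.finset_sum_coeff]
    have hterm : ∀ t : Fin (n + 1),
        (Polynomial.C ((r.choose t.1 : F) * x t) * Polynomial.X ^ (r - t.1)).coeff (r - s.1)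
        = if r - s.1 = r - t.1 then (r.choose t.1 : F) * x t else 0 := by
      intro t
      rw [Polynomial.coeff_C_mul, Polynomial.coeff_X_pow]
      split_ifs with h
      · rw [mul_one]
      · rw [mul_zero]
    rw [Finset.sum_congr rfl fun t _ => hterm t]
    rw [Finset.sum_eq_single s]
    · rw [if_pos rfl]
    · intro t _ hts
      split_ifs with he
      · rcases le_or_gt t.1 r with h1 | h1
        · have : t.1 = s.1 := by omega
          exact absurd (Fin.ext this) hts
        · simp [Nat.choose_eq_zero_of_lt h1]
      · rfl
    · intro hs; exact absurd (Finset.mem_univ s) hs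
  have : (r.choose s.1 : F) * x s = 0 := by rw [← hcoeff, hP0, Polynomial.coeff_zero]
  have hcz : (r.choose s.1 : F) ≠ 0 := fun h => hps ((CharP.cast_eq_zero_iff F p _).1 h)
  exact (mul_eq_zero.1 this).resolve_left hcz

/-- the good index predicate -/
def goodIdx (p n c : ℕ) (i : Fin (n + 1)) : Prop :=
  n + 1 ≤ i.1 + c ∧ ∀ r, c ≤ r → r ≤ n → p ∣ r.choose i.1

lemma nucleus_eq_span (hp : p.Prime) (hF : (c : Cardinal) ≤ Cardinal.mk F) (hc : c ≤ n + 1) :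
    nucleus F n c
      = Submodule.span F ((fun i => Pi.single i (1 : F)) '' {i | goodIdx p n c i}) := by
  apply le_antisymm
  · intro x hx
    classical
    have h0 : ∀ i : Fin (n + 1), ¬ goodIdx p n c i → x i = 0 := by
      intro i hgi
      by_cases hA : n + 1 ≤ i.1 + c
      · have hB : ¬ ∀ r, c ≤ r → r ≤ n → p ∣ r.choose i.1 := fun hB => hgi ⟨hA, hB⟩
        push_neg at hB
        obtain ⟨r, hcr, hrn, hdvd⟩ := hB
        exact nucleus_coord_zero F p hp hF hx hcr hrn i hdvd
      · exact (mem_coordZero F).1 (oscInfty_le_coordZero F hx.2) i (by omega)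
    have hxsum : x = ∑ i ∈ Finset.univ.filter (goodIdx p n c), x i • (Pi.single i 1 : Fin (n + 1) → F) := by
      have h1 : x = ∑ i : Fin (n + 1), x i • (Pi.single i 1 : Fin (n + 1) → F) := by
        funext j
        rw [Finset.sum_apply]
        simp only [Pi.smul_apply, Pi.single_apply, smul_eq_mul, mul_ite, mul_one, mul_zero]
        rw [Finset.sum_ite_eq]
        simp
      nth_rewrite 1 [h1]
      symm
      apply Finset.sum_subset (Finset.filter_subset _ _)
      intro i _ hni
      rw [Finset.mem_filter] at hni
      have : ¬ goodIdx p n c i := fun h => hni ⟨Finset.mem_univ i, h⟩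
      rw [h0 i this, zero_smul]
    rw [hxsum]
    apply Submodule.sum_mem
    intro i hi
    rw [Finset.mem_filter] at hi
    exact Submodule.smul_mem _ _ (Submodule.subset_span ⟨i, hi.2, rfl⟩)
  · rw [Submodule.span_le]
    rintro _ ⟨i, hi, rfl⟩
    rw [SetLike.mem_coe]
    exact ⟨(Submodule.mem_iInf _).2 fun u => single_mem_oscSub F p u i hc hi.2,
      single_mem_oscInfty F hi.1⟩

lemma finrank_span_singles {b : ℕ} (P : Fin b → Prop) [DecidablePred P] :
    Module.finrank F (Submodule.span F ((fun i : Fin b => (Pi.single i 1 : Fin b → F)) '' {i | P i}))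
      = (Finset.univ.filter P).card := by
  classical
  have hli : LinearIndependent F (fun i : {i : Fin b // P i} => (Pi.single i.1 1 : Fin b → F)) := by
    have h1 := (Pi.basisFun F (Fin b)).linearIndependent
    have h2 := h1.comp (Subtype.val : {i : Fin b // P i} → Fin b) Subtype.val_injective
    have : (fun i : {i : Fin b // P i} => (Pi.single i.1 1 : Fin b → F))
        = (⇑(Pi.basisFun F (Fin b)) ∘ Subtype.val) := by
      funext i; simp [Pi.basisFun_apply]
    rw [this]
    exact h2
  have hrange : Set.range (fun i : {i : Fin b // P i} => (Pi.single i.1 1 : Fin b → F))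
      = (fun i : Fin b => (Pi.single i 1 : Fin b → F)) '' {i | P i} := by
    ext y
    constructor
    · rintro ⟨i, rfl⟩; exact ⟨i.1, i.2, rfl⟩
    · rintro ⟨i, hi, rfl⟩; exact ⟨⟨i, hi⟩, rfl⟩
  rw [← hrange, finrank_span_eq_card hli, Fintype.card_subtype]

end LinAlg

section Counting

open Finset

variable {p : ℕ}

lemma dle_of_lt_p {a g : ℕ} (hag : a ≤ g) (hg : g < p) : Dle p a g := by
  rw [dle_iff]
  constructor
  · rw [Nat.mod_eq_of_lt (by omega), Nat.mod_eq_of_lt (by omega)]; exact hag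
  · rw [Nat.div_eq_of_lt (by omega), Nat.div_eq_of_lt (by omega)]
    exact dle_refl 0

lemma pow_succ_sub_one (hp : 2 ≤ p) (t : ℕ) :
    p ^ (t + 1) - 1 = p * (p ^ t - 1) + (p - 1) := by
  have h1 : p ^ (t + 1) = p * p ^ t := by rw [pow_succ']
  have h2 : p * (p ^ t - 1) = p * p ^ t - p * 1 := by rw [Nat.mul_sub]
  have h3 : 1 ≤ p ^ t := Nat.one_le_pow _ _ (by omega)
  have h4 : p * 1 ≤ p * p ^ t := Nat.mul_le_mul_left _ h3
  omega

lemma dle_pow_sub_one (hp : 2 ≤ p) : ∀ t x, x < p ^ t → Dle p x (p ^ t - 1) := by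
  intro t
  induction t with
  | zero =>
    intro x hx
    have hx0 : x = 0 := by simpa using hx
    subst hx0
    exact dle_zero 0
  | succ t ih =>
    intro x hx
    rw [dle_iff]
    have hkey := pow_succ_sub_one hp t
    constructor
    · have h1 : (p ^ (t + 1) - 1) % p = p - 1 := by
        rw [hkey, Nat.mul_add_mod]
        exact Nat.mod_eq_of_lt (by omega)
      have := Nat.mod_lt x (show 0 < p by omega)
      omega
    · have h2 : (p ^ (t + 1) - 1) / p = p ^ t - 1 := by
        rw [hkey, Nat.mul_add_div (by omega)]
        rw [Nat.div_eq_of_lt (by omega), add_zero]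
      rw [h2]
      apply ih
      exact Nat.div_lt_of_lt_mul (by rw [← pow_succ']; exact hx)

lemma dle_add_high (hp : 2 ≤ p) :
    ∀ t x y s g, x < p ^ t → y < p ^ t → s ≤ g → g < p → Dle p x y →
      Dle p (x + s * p ^ t) (y + g * p ^ t) := by
  intro t
  induction t with
  | zero =>
    intro x y s g hx hy hsg hg _
    simp only [pow_zero, mul_one] at *
    interval_cases x
    interval_cases y
    simpa using dle_of_lt_p hsg hg
  | succ t ih =>
    intro x y s g hx hy hsg hg hxy
    rw [dle_iff] at hxy ⊢
    have hps : p ^ (t + 1) = p ^ t * p := pow_succ p t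
    constructor
    · have e1 : (x + s * p ^ (t + 1)) % p = x % p := by
        rw [hps, ← mul_assoc, Nat.add_mul_mod_self_right]
      have e2 : (y + g * p ^ (t + 1)) % p = y % p := by
        rw [hps, ← mul_assoc, Nat.add_mul_mod_self_right]
      rw [e1, e2]; exact hxy.1
    · have e1 : (x + s * p ^ (t + 1)) / p = x / p + s * p ^ t := by
        rw [hps, ← mul_assoc, Nat.add_mul_div_right _ _ (show 0 < p by omega)]
      have e2 : (y + g * p ^ (t + 1)) / p = y / p + g * p ^ t := by
        rw [hps, ← mul_assoc, Nat.add_mul_div_right _ _ (show 0 < p by omega)]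
      rw [e1, e2]
      apply ih _ _ _ _ _ _ hsg hg hxy.2
      · exact Nat.div_lt_of_lt_mul (by rw [← pow_succ']; exact hx)
      · exact Nat.div_lt_of_lt_mul (by rw [← pow_succ']; exact hy)

lemma div_pow_add (hK : t < p ^ K) (A : ℕ) : (A * p ^ K + t) / p ^ K = A := by
  have h0 : 0 < p ^ K := by omega
  rw [mul_comm, Nat.mul_add_div h0, Nat.div_eq_of_lt hK, add_zero]

lemma mod_pow_add (hK : t < p ^ K) (A : ℕ) : (A * p ^ K + t) % p ^ K = t := by
  rw [mul_comm A, Nat.mul_add_mod, Nat.mod_eq_of_lt hK]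

lemma dle_split (hp : 2 ≤ p) : ∀ K i r, Dle p i r ↔
    (Dle p (i % p ^ K) (r % p ^ K) ∧ Dle p (i / p ^ K) (r / p ^ K)) := by
  intro K
  induction K with
  | zero =>
    intro i r
    simp only [pow_zero, Nat.mod_one, Nat.div_one]
    exact ⟨fun h => ⟨dle_refl 0, h⟩, fun h => h.2⟩
  | succ K ih =>
    intro i r
    have hps : p ^ (K + 1) = p * p ^ K := pow_succ' p (K)
    have hm : ∀ j : ℕ, j % p ^ (K + 1) % p = j % p := fun j =>
      Nat.mod_mod_of_dvd _ ⟨p ^ K, hps⟩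
    have hd : ∀ j : ℕ, j % p ^ (K + 1) / p = j / p % p ^ K := fun j => by
      rw [hps]; exact Nat.mod_mul_right_div_self j p (p ^ K)
    have hdd : ∀ j : ℕ, j / p ^ (K + 1) = j / p / p ^ K := fun j => by
      rw [hps, Nat.div_div_eq_div_mul]
    constructor
    · intro h
      have h' := (dle_iff).1 h
      have h2 := (ih (i / p) (r / p)).1 h'.2
      refine ⟨(dle_iff).2 ⟨by rw [hm, hm]; exact h'.1, by rw [hd, hd]; exact h2.1⟩, ?_⟩
      rw [hdd, hdd]; exact h2.2
    · rintro ⟨h1, h2⟩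
      have h1' := (dle_iff).1 h1
      apply (dle_iff).2
      refine ⟨by rw [hm, hm] at h1'; exact h1'.1, ?_⟩
      apply (ih (i / p) (r / p)).2
      refine ⟨by rw [hd, hd] at h1'; exact h1'.2, ?_⟩
      rw [← hdd, ← hdd]; exact h2

lemma bad_iff (hp : 2 ≤ p) {b B R σ0 β m'' d : ℕ} (hσR : σ0 < R) (hβ1 : 1 ≤ β) (hβp : β < p)
    (hm'' : m'' < p ^ σ0) (hmR : β * p ^ σ0 + m'' < p ^ R)
    (hb : b = B * p ^ R + (β * p ^ σ0 + m''))
    (hd1 : m'' < d) (hd2 : d ≤ β * p ^ σ0 + m'') (i : ℕ) :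
    (i < d ∨ ∃ r, b - d ≤ r ∧ r + 1 ≤ b ∧ Dle p i r)
      ↔ (i % p ^ R < β * p ^ σ0 + m'' ∧ Dle p (i / p ^ R) B) := by
  have hq1 : 1 ≤ p ^ σ0 := Nat.one_le_pow _ _ (by omega)
  have hm1 : 1 ≤ β * p ^ σ0 + m'' := by
    have : 1 * p ^ σ0 ≤ β * p ^ σ0 := Nat.mul_le_mul_right _ hβ1
    omega
  have h6 : 1 * p ^ σ0 ≤ β * p ^ σ0 := Nat.mul_le_mul_right _ hβ1
  constructor
  · rintro (h | ⟨r, hr1, hr2, hr3⟩)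
    · have hi : i < p ^ R := by omega
      rw [Nat.mod_eq_of_lt hi, Nat.div_eq_of_lt hi]
      exact ⟨by omega, dle_zero B⟩
    · have hrge : B * p ^ R ≤ r := by omega
      have hrt : r = B * p ^ R + (r - B * p ^ R) := by omega
      have htm : r - B * p ^ R < β * p ^ σ0 + m'' := by omega
      have htR : r - B * p ^ R < p ^ R := by omega
      have hrd : r / p ^ R = B := by rw [hrt]; exact div_pow_add htR B
      have hrm : r % p ^ R = r - B * p ^ R := by
        conv_lhs => rw [hrt]
        exact mod_pow_add htR B
      have hsplit := (dle_split hp R i r).1 hr3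
      rw [hrd, hrm] at hsplit
      refine ⟨?_, hsplit.2⟩
      have := dle_le hp hsplit.1
      omega
  · rintro ⟨h1, h2⟩
    by_cases hid : i < d
    · exact Or.inl hid
    right
    have hq0 : 0 < p ^ σ0 := hq1
    obtain ⟨γ, i'', hi''q, hii⟩ : ∃ γ i'', i'' < p ^ σ0 ∧ i % p ^ R = γ * p ^ σ0 + i'' :=
      ⟨i % p ^ R / p ^ σ0, i % p ^ R % p ^ σ0, Nat.mod_lt _ hq0, by
        rw [mul_comm]; exact (Nat.div_add_mod _ _).symm⟩
    have hγβ : γ ≤ β := by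
      by_contra hcon
      have h4 : (β + 1) * p ^ σ0 ≤ γ * p ^ σ0 := Nat.mul_le_mul_right _ (by omega)
      have h5 : (β + 1) * p ^ σ0 = β * p ^ σ0 + p ^ σ0 := by ring
      omega
    -- choose r' suitable
    have key : ∃ r', (β * p ^ σ0 + m'') - d ≤ r' ∧ r' < β * p ^ σ0 + m'' ∧
        Dle p (i % p ^ R) r' := by
      rcases eq_or_lt_of_le hγβ with hγ | hγ
      · -- γ = β : take r' = i % p ^ R
        refine ⟨i % p ^ R, ?_, by omega, dle_refl _⟩
        rw [hγ] at hii
        omega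
      · -- γ < β : take r' = β * p ^ σ0 - 1
        refine ⟨β * p ^ σ0 - 1, by omega, by omega, ?_⟩
        have hrw : β * p ^ σ0 - 1 = (p ^ σ0 - 1) + (β - 1) * p ^ σ0 := by
          have : (β - 1) * p ^ σ0 = β * p ^ σ0 - p ^ σ0 := by rw [Nat.sub_mul, one_mul]
          omega
        rw [hii, hrw, add_comm (γ * p ^ σ0) i'']
        exact dle_add_high hp σ0 i'' (p ^ σ0 - 1) γ (β - 1) hi''q (by omega) (by omega)
          (by omega) (dle_pow_sub_one hp σ0 i'' hi''q)
    obtain ⟨r', hr1', hr2', hr3'⟩ := key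
    refine ⟨B * p ^ R + r', by omega, by omega, ?_⟩
    have hr'R : r' < p ^ R := by omega
    apply (dle_split hp R i (B * p ^ R + r')).2
    rw [div_pow_add hr'R B, mod_pow_add hr'R B]
    exact ⟨hr3', h2⟩

attribute [local instance] Classical.propDecidable

lemma card_dle_eq_prod (hp : 2 ≤ p) : ∀ K B, B < p ^ K →
    ((range (B + 1)).filter (fun S => Dle p S B)).card
      = ∏ σ ∈ range K, (digit p B σ + 1) := by
  intro K
  induction K with
  | zero =>
    intro B hB
    have hB0 : B = 0 := by simpa using hB
    subst hB0
    rw [Finset.range_one, Finset.filter_singleton, if_pos (dle_zero 0)]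
    simp
  | succ K ih =>
    intro B hB
    have hp0 : 0 < p := by omega
    have hBp : B % p < p := Nat.mod_lt _ hp0
    have hmoddiv : ∀ x : ℕ × ℕ, x.1 < B % p + 1 →
        (x.2 * p + x.1) % p = x.1 ∧ (x.2 * p + x.1) / p = x.2 := by
      intro x hx1
      constructor
      · rw [mul_comm, Nat.mul_add_mod]
        exact Nat.mod_eq_of_lt (by omega)
      · rw [mul_comm, Nat.mul_add_div hp0, Nat.div_eq_of_lt (by omega), add_zero]
    have hcard : ((range (B + 1)).filter (fun S => Dle p S B)).card
        = ((range (B % p + 1)) ×ˢ ((range (B / p + 1)).filter (fun T => Dle p T (B / p)))).card := by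
      apply Finset.card_bij' (fun S _ => (S % p, S / p)) (fun x _ => x.2 * p + x.1)
      · intro S hS
        rw [Finset.mem_filter, Finset.mem_range] at hS
        have hd := (dle_iff).1 hS.2
        rw [Finset.mem_product, Finset.mem_range, Finset.mem_filter, Finset.mem_range]
        refine ⟨by omega, ?_, hd.2⟩
        have := dle_le hp hd.2
        omega
      · intro x hx
        rw [Finset.mem_product, Finset.mem_range, Finset.mem_filter, Finset.mem_range] at hx
        obtain ⟨hx1, hx2, hx3⟩ := hx
        obtain ⟨e1, e2⟩ := hmoddiv x hx1
        have hdle : Dle p (x.2 * p + x.1) B := by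
          apply (dle_iff).2
          rw [e1, e2]
          exact ⟨by omega, hx3⟩
        rw [Finset.mem_filter, Finset.mem_range]
        exact ⟨by have := dle_le hp hdle; omega, hdle⟩
      · intro S hS
        show S / p * p + S % p = S
        rw [mul_comm]
        exact Nat.div_add_mod S p
      · intro x hx
        rw [Finset.mem_product, Finset.mem_range, Finset.mem_filter, Finset.mem_range] at hx
        obtain ⟨e1, e2⟩ := hmoddiv x hx.1
        simp only [e1, e2]
    rw [hcard, Finset.card_product, Finset.card_range]
    have hBpK : B / p < p ^ K :=
      Nat.div_lt_of_lt_mul (by rw [← pow_succ']; exact hB)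
    rw [ih (B / p) hBpK]
    rw [Finset.prod_range_succ']
    simp only [digit_succ, digit_zero]
    ring

lemma card_badset (hp : 2 ≤ p) (B R m : ℕ) (hmR : m ≤ p ^ R) :
    ((range (B * p ^ R + m)).filter (fun i => i % p ^ R < m ∧ Dle p (i / p ^ R) B)).card
      = m * ((range (B + 1)).filter (fun S => Dle p S B)).card := by
  have hp0 : 0 < p ^ R := Nat.pow_pos (by omega : 0 < p)
  have hcard : ((range (B * p ^ R + m)).filter
        (fun i => i % p ^ R < m ∧ Dle p (i / p ^ R) B)).card
      = ((range m) ×ˢ ((range (B + 1)).filter (fun S => Dle p S B))).card := by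
    apply Finset.card_bij' (fun i _ => (i % p ^ R, i / p ^ R)) (fun x _ => x.2 * p ^ R + x.1)
    · intro i hi
      rw [Finset.mem_filter, Finset.mem_range] at hi
      obtain ⟨hi1, hi2, hi3⟩ := hi
      rw [Finset.mem_product, Finset.mem_range, Finset.mem_filter, Finset.mem_range]
      refine ⟨hi2, ?_, hi3⟩
      have := dle_le hp hi3
      omega
    · intro x hx
      rw [Finset.mem_product, Finset.mem_range, Finset.mem_filter, Finset.mem_range] at hx
      obtain ⟨hx1, hx2, hx3⟩ := hx
      have hx1R : x.1 < p ^ R := by omega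
      rw [Finset.mem_filter, Finset.mem_range]
      rw [div_pow_add hx1R x.2, mod_pow_add hx1R x.2]
      refine ⟨?_, hx1, hx3⟩
      have hle : x.2 ≤ B := dle_le hp hx3
      have : x.2 * p ^ R ≤ B * p ^ R := Nat.mul_le_mul_right _ hle
      omega
    · intro i hi
      show i / p ^ R * p ^ R + i % p ^ R = i
      rw [mul_comm]
      exact Nat.div_add_mod i (p ^ R)
    · intro x hx
      rw [Finset.mem_product, Finset.mem_range] at hx
      have hx1R : x.1 < p ^ R := by omega
      show (_, _) = x
      rw [div_pow_add hx1R x.2, mod_pow_add hx1R x.2]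
  rw [hcard, Finset.card_product, Finset.card_range]

lemma card_filter_fin (b : ℕ) (P : Fin b → Prop) (PP : ℕ → Prop) [DecidablePred P]
    [DecidablePred PP] (h : ∀ i : Fin b, P i ↔ PP i.1) :
    ((Finset.univ : Finset (Fin b)).filter P).card = ((range b).filter PP).card := by
  rw [Finset.card_filter, Finset.card_filter]
  have he : ∀ i : Fin b, (if P i then (1 : ℕ) else 0) = (if PP i.1 then 1 else 0) := by
    intro i
    by_cases hP : P i
    · rw [if_pos hP, if_pos ((h i).1 hP)]
    · rw [if_neg hP, if_neg (fun hpp => hP ((h i).2 hpp))]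
  rw [Finset.sum_congr rfl fun i _ => he i]
  exact Fin.sum_univ_eq_sum_range (fun j => if PP j then 1 else 0) b

lemma digit_add_left (p x K σ : ℕ) : digit p x (K + σ) = digit p (x / p ^ K) σ := by
  simp [digit, pow_add, Nat.div_div_eq_div_mul]

end Counting

end NRC

open NRC in
/-- Dimension of the `k`-nucleus (`c = k+1`): if `char F = p > 0`, `#F ≥ k+1`,
`T(R,b) ≤ k+1 < T(Q,b)` for `b := n+1`, and at most one digit `b_σ` with
`Q ≤ σ < R` is non-zero, then the `k`-nucleus of `V_1^n` has projective dimension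
`n − (1 + Σ_{μ<R} n_μ p^μ) · ∏_{σ≥R} (n_σ+1)`, i.e. vector-space dimension
`n + 1 − (1 + Σ_{μ<R} n_μ p^μ) · ∏_{σ≥R} (n_σ+1)`. -/
theorem nucleus_finrank (F : Type) [Field F] (p : ℕ) (hp : p.Prime) [CharP F p]
    (n c Q R : ℕ) (hn : 2 ≤ n) (hQR : Q ≤ R)
    (hF : (c : Cardinal) ≤ Cardinal.mk F)
    (h1 : topLine p (n + 1) R ≤ c) (h2 : c < topLine p (n + 1) Q)
    (h3 : ((Finset.Ico Q R).filter fun σ => digit p (n + 1) σ ≠ 0).card ≤ 1) :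
    Module.finrank F (nucleus F n c)
      = n + 1 - (1 + ∑ μ ∈ Finset.range R, digit p n μ * p ^ μ) *
          ∏ σ ∈ Finset.Ico R (n + 1), (digit p n σ + 1) := by
  classical
  have hp2 : 2 ≤ p := hp.two_le
  rw [topLine_eq hp2] at h1 h2
  have hpQ0 : 0 < p ^ Q := Nat.pow_pos (by omega : 0 < p)
  have hpR0 : 0 < p ^ R := Nat.pow_pos (by omega : 0 < p)
  obtain ⟨M, hM⟩ : ∃ M, (n + 1) % p ^ R = M := ⟨_, rfl⟩
  obtain ⟨M', hM'⟩ : ∃ M', (n + 1) % p ^ Q = M' := ⟨_, rfl⟩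
  obtain ⟨Bv, hBv⟩ : ∃ Bv, (n + 1) / p ^ R = Bv := ⟨_, rfl⟩
  rw [hM] at h1
  rw [hM'] at h2
  have hmle : M ≤ n + 1 := by rw [← hM]; exact Nat.mod_le _ _
  have hm2le : M' ≤ n + 1 := by rw [← hM']; exact Nat.mod_le _ _
  have h1' : n + 1 ≤ c + M := Nat.sub_le_iff_le_add.1 h1
  have h2' : c + M' < n + 1 := Nat.lt_sub_iff_add_lt.1 h2
  clear h1 h2
  have hcb : c < n + 1 := by omega
  have hdm : n + 1 - c ≤ M := by omega
  have hd1 : M' < n + 1 - c := by omega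
  -- locate the unique non-zero digit in [Q, R)
  have hsum : ∑ σ ∈ Finset.range Q, digit p (n + 1) σ * p ^ σ
      + ∑ σ ∈ Finset.Ico Q R, digit p (n + 1) σ * p ^ σ
      = ∑ σ ∈ Finset.range R, digit p (n + 1) σ * p ^ σ := by
    simpa using Finset.sum_range_add_sum_Ico (fun σ => digit p (n + 1) σ * p ^ σ) hQR
  rw [sum_digit_mul_pow, sum_digit_mul_pow, hM, hM'] at hsum
  have hex : ∃ σ0, σ0 ∈ Finset.Ico Q R ∧ digit p (n + 1) σ0 ≠ 0 := by
    by_contra hcon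
    push_neg at hcon
    have hz : ∑ σ ∈ Finset.Ico Q R, digit p (n + 1) σ * p ^ σ = 0 :=
      Finset.sum_eq_zero fun σ hσ => by rw [hcon σ hσ]; ring
    omega
  obtain ⟨σ0, hσ0mem, hσ0ne⟩ := hex
  have hQσ : Q ≤ σ0 ∧ σ0 < R := by simpa using hσ0mem
  have huniq : ∀ σ ∈ Finset.Ico Q R, σ ≠ σ0 → digit p (n + 1) σ * p ^ σ = 0 := by
    intro σ hσ hneq
    have ha : σ0 ∈ (Finset.Ico Q R).filter (fun σ => digit p (n + 1) σ ≠ 0) :=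
      Finset.mem_filter.2 ⟨hσ0mem, hσ0ne⟩
    have hdz : digit p (n + 1) σ = 0 := by
      by_contra hcon
      have hb' : σ ∈ (Finset.Ico Q R).filter (fun σ => digit p (n + 1) σ ≠ 0) :=
        Finset.mem_filter.2 ⟨hσ, hcon⟩
      exact hneq (Finset.card_le_one.1 h3 _ hb' _ ha)
    rw [hdz]; ring
  have hsum2 : ∑ σ ∈ Finset.Ico Q R, digit p (n + 1) σ * p ^ σ
      = digit p (n + 1) σ0 * p ^ σ0 :=
    Finset.sum_eq_single_of_mem σ0 hσ0mem huniq
  have hβp : digit p (n + 1) σ0 < p := digit_lt hp2 _ _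
  have hβ1 : 1 ≤ digit p (n + 1) σ0 := Nat.pos_of_ne_zero hσ0ne
  have hmeq : M = digit p (n + 1) σ0 * p ^ σ0 + M' := by omega
  have hpσ0 : 0 < p ^ σ0 := Nat.pow_pos (by omega : 0 < p)
  have hm''σ : M' < p ^ σ0 := by
    rw [← hM']
    exact lt_of_lt_of_le (Nat.mod_lt _ hpQ0) (Nat.pow_le_pow_right (by omega) hQσ.1)
  have hmRlt : M < p ^ R := by rw [← hM]; exact Nat.mod_lt _ hpR0
  have hbdec : n + 1 = Bv * p ^ R + M := by
    rw [← hM, ← hBv, mul_comm]; exact (Nat.div_add_mod _ _).symm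
  have hDσ : 1 * p ^ σ0 ≤ digit p (n + 1) σ0 * p ^ σ0 := Nat.mul_le_mul_right _ hβ1
  have hm1 : 1 ≤ M := by omega
  -- reduce to counting good indices
  rw [nucleus_eq_span F p hp hF (by omega), finrank_span_singles F (goodIdx p n c)]
  have htrans : (Finset.univ.filter (goodIdx p n c)).card
      = ((Finset.range (n + 1)).filter
          (fun j => n + 1 ≤ j + c ∧ ∀ r, c ≤ r → r ≤ n → p ∣ r.choose j)).card :=
    card_filter_fin (n + 1) (goodIdx p n c)
      (fun j => n + 1 ≤ j + c ∧ ∀ r, c ≤ r → r ≤ n → p ∣ r.choose j)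
      (fun i => Iff.rfl)
  rw [htrans]
  -- the complement is the bad set
  have hbad : ∀ j ∈ Finset.range (n + 1),
      (¬ (n + 1 ≤ j + c ∧ ∀ r, c ≤ r → r ≤ n → p ∣ r.choose j))
      ↔ (j % p ^ R < M ∧ Dle p (j / p ^ R) Bv) := by
    intro j _
    have hiff1 : (¬ (n + 1 ≤ j + c ∧ ∀ r, c ≤ r → r ≤ n → p ∣ r.choose j))
        ↔ (j < n + 1 - c ∨ ∃ r, (n + 1) - (n + 1 - c) ≤ r ∧ r + 1 ≤ n + 1 ∧ Dle p j r) := by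
      rw [not_and_or]
      constructor
      · rintro (h | h)
        · left; omega
        · push_neg at h
          obtain ⟨r, hr1, hr2, hr3⟩ := h
          right
          exact ⟨r, by omega, by omega, (lucas_not_dvd_iff hp r j).1 hr3⟩
      · rintro (h | ⟨r, hr1, hr2, hr3⟩)
        · left; omega
        · right
          push_neg
          exact ⟨r, by omega, by omega, (lucas_not_dvd_iff hp r j).2 hr3⟩
    rw [hiff1]
    have hbi := bad_iff hp2 (b := n + 1) (B := Bv) hQσ.2 hβ1 hβp hm''σ
      (by rw [← hmeq]; exact hmRlt) (by rw [← hmeq]; exact hbdec) hd1 (by omega) j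
    rw [← hmeq] at hbi
    exact hbi
  have hfe : (Finset.range (n + 1)).filter
        (fun j => ¬ (n + 1 ≤ j + c ∧ ∀ r, c ≤ r → r ≤ n → p ∣ r.choose j))
      = (Finset.range (n + 1)).filter
        (fun j => j % p ^ R < M ∧ Dle p (j / p ^ R) Bv) :=
    Finset.filter_congr hbad
  -- bound on B
  have hBK : Bv < p ^ (n + 1 - R) := by
    rw [← hBv]
    rcases le_or_gt R (n + 1) with hR | hR
    · apply (Nat.div_lt_iff_lt_mul hpR0).2
      rw [← pow_add]
      have he : n + 1 - R + R = n + 1 := by omega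
      rw [he]
      exact self_lt_pow hp2 (n + 1)
    · have h0 : (n + 1) / p ^ R = 0 := Nat.div_eq_of_lt
        (lt_of_lt_of_le (self_lt_pow hp2 (n + 1)) (Nat.pow_le_pow_right (by omega) (by omega)))
      rw [h0]
      exact Nat.pow_pos (by omega : 0 < p)
  -- count the bad set
  have hcount : ((Finset.range (n + 1)).filter
        (fun j => j % p ^ R < M ∧ Dle p (j / p ^ R) Bv)).card
      = M * ∏ σ ∈ Finset.range (n + 1 - R), (digit p Bv σ + 1) := by
    have hcb' := card_badset hp2 Bv R M (le_of_lt hmRlt)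
    rw [← hbdec] at hcb'
    rw [hcb', card_dle_eq_prod hp2 (n + 1 - R) _ hBK]
  -- match the right-hand side
  have hn' : n = Bv * p ^ R + (M - 1) := by omega
  have hm1R : M - 1 < p ^ R := by omega
  have hnsum : ∑ μ ∈ Finset.range R, digit p n μ * p ^ μ = M - 1 := by
    rw [sum_digit_mul_pow]
    conv_lhs => rw [hn']
    exact mod_pow_add hm1R _
  have hnB : n / p ^ R = Bv := by
    conv_lhs => rw [hn']
    exact div_pow_add hm1R _
  have hprod : ∏ σ ∈ Finset.Ico R (n + 1), (digit p n σ + 1)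
      = ∏ σ ∈ Finset.range (n + 1 - R), (digit p Bv σ + 1) := by
    rcases le_or_gt R (n + 1) with hR | hR
    · rw [Finset.prod_Ico_eq_prod_range]
      exact Finset.prod_congr rfl fun σ _ => by rw [digit_add_left, hnB]
    · rw [Finset.Ico_eq_empty (by omega)]
      have h0 : n + 1 - R = 0 := by omega
      rw [h0]
      simp
  rw [hprod, hnsum]
  have h1m : 1 + (M - 1) = M := by omega
  rw [h1m]
  have hcompl : ((Finset.range (n + 1)).filter
        (fun j => n + 1 ≤ j + c ∧ ∀ r, c ≤ r → r ≤ n → p ∣ r.choose j)).card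
      + ((Finset.range (n + 1)).filter
        (fun j => ¬ (n + 1 ≤ j + c ∧ ∀ r, c ≤ r → r ≤ n → p ∣ r.choose j))).card
      = n + 1 := by
    rw [Finset.card_filter_add_card_filter_not, Finset.card_range]
  rw [hfe, hcount] at hcompl
  omega
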